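/- Let B⁺ be a commutative ring and let (t, a₁, …, aₙ) be a regular sequence in B⁺. Let C⁺ := (B⁺[X₁, …, Xₙ]/(tX₁ − a₁, …, tXₙ − aₙ)). Then the quotient C⁺/(t) is isomorphic to the polynomial ring (B⁺/(t, a₁, …, aₙ))[X₁, …, Xₙ]; in particular the images of X₁, …, Xₙ (i.e. of a₁/t, …, aₙ/t) form a regular sequence in C⁺/(t). -/

import Mathlib

set_option synthInstance.maxHeartbeats 1000000
set_option maxHeartbeats 1000000

open MvPolynomial

variable {B : Type*} [CommRing B]

section Aux

open RingTheory.Sequence Pointwise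

/-- Transfer a regular sequence along a ring isomorphism. -/
lemma auxForall₂ {α β : Type*} {P : α → β → Prop} {n : ℕ} {f : Fin n → α} {g : Fin n → β}
    (h : ∀ i, P (f i) (g i)) : List.Forall₂ P (List.ofFn f) (List.ofFn g) := by
  rw [List.forall₂_iff_get]
  exact ⟨by simp, fun i h1 h2 => by simpa using h _⟩

lemma auxRegCongr {R S : Type*} [CommRing R] [CommRing S] (e : R ≃+* S) (l : List R) :
    IsRegular R l ↔ IsRegular S (l.map e) :=
  AddEquiv.isRegular_congr (e := e.toAddEquiv) <| List.forall₂_map_right_iff.mpr <|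
    List.forall₂_same.mpr fun r _ x => by
      simp [smul_eq_mul, map_mul]

/-- Killing one variable of a polynomial ring. -/
noncomputable def auxKillX0 (S : Type*) [CommRing S] (n : ℕ) :
    (MvPolynomial (Fin (n + 1)) S ⧸ Ideal.span {(X 0 : MvPolynomial (Fin (n + 1)) S)})
      ≃+* MvPolynomial (Fin n) S := by
  let f : MvPolynomial (Fin (n + 1)) S →+* MvPolynomial (Fin n) S :=
    eval₂Hom C (Fin.cases 0 X)
  have hf0 : f (X 0) = 0 := by simp [f]
  let F : (MvPolynomial (Fin (n + 1)) S ⧸ Ideal.span {(X 0 : MvPolynomial (Fin (n + 1)) S)})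
      →+* MvPolynomial (Fin n) S :=
    Ideal.Quotient.lift _ f (by
      intro p hp
      obtain ⟨c, rfl⟩ := Ideal.mem_span_singleton'.mp hp
      rw [map_mul, hf0, mul_zero])
  let G : MvPolynomial (Fin n) S →+*
      (MvPolynomial (Fin (n + 1)) S ⧸ Ideal.span {(X 0 : MvPolynomial (Fin (n + 1)) S)}) :=
    (Ideal.Quotient.mk _).comp (MvPolynomial.rename Fin.succ).toRingHom
  refine RingEquiv.ofRingHom F G ?_ ?_
  swap
  · apply Ideal.Quotient.ringHom_ext
    apply MvPolynomial.ringHom_ext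
    · intro s; simp [F, G, f]
    · intro i
      refine Fin.cases ?_ ?_ i
      · simp [F, G, f, Ideal.Quotient.eq_zero_iff_mem, Ideal.subset_span]
      · intro j; simp [F, G, f]
  · apply MvPolynomial.ringHom_ext <;> intro i <;>
      simp [F, G, f]

lemma auxKillX0_mk (S : Type*) [CommRing S] (n : ℕ) (p : MvPolynomial (Fin (n + 1)) S) :
    auxKillX0 S n (Ideal.Quotient.mk _ p) = eval₂Hom C (Fin.cases 0 X) p := rfl

/-- The variables form a regular sequence in a polynomial ring over a nontrivial ring. -/
lemma auxXReg (S : Type*) [CommRing S] [Nontrivial S] (n : ℕ) :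
    IsRegular (MvPolynomial (Fin n) S) (List.ofFn (X : Fin n → MvPolynomial (Fin n) S)) := by
  induction n with
  | zero => exact IsRegular.nil _ _
  | succ n ih =>
    rw [List.ofFn_succ]
    refine IsRegular.cons (isRegular_X.left) ?_
    -- transfer `ih` to `QuotSMulTop (X 0) _`
    have hsm : ((X 0 : MvPolynomial (Fin (n + 1)) S) •
        (⊤ : Submodule (MvPolynomial (Fin (n + 1)) S) (MvPolynomial (Fin (n + 1)) S))) =
        Ideal.span {(X 0 : MvPolynomial (Fin (n + 1)) S)} := by
      rw [← Submodule.ideal_span_singleton_smul, smul_eq_mul, Ideal.mul_top]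
    let e0 : QuotSMulTop (X 0 : MvPolynomial (Fin (n + 1)) S) (MvPolynomial (Fin (n + 1)) S) ≃+
        (MvPolynomial (Fin (n + 1)) S ⧸ Ideal.span {(X 0 : MvPolynomial (Fin (n + 1)) S)}) :=
      (Submodule.quotEquivOfEq _ _ hsm).toAddEquiv
    have he0 : ∀ p, e0 (Submodule.Quotient.mk p) = Ideal.Quotient.mk _ p := fun _ => rfl
    let e : QuotSMulTop (X 0 : MvPolynomial (Fin (n + 1)) S) (MvPolynomial (Fin (n + 1)) S) ≃+
        MvPolynomial (Fin n) S := e0.trans (auxKillX0 S n).toAddEquiv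
    have hmk : ∀ q : MvPolynomial (Fin (n + 1)) S,
        e (Submodule.Quotient.mk q) = auxKillX0 S n (Ideal.Quotient.mk _ q) := fun _ => rfl
    have key : List.Forall₂
        (fun (r : MvPolynomial (Fin (n + 1)) S) (s : MvPolynomial (Fin n) S) =>
          ∀ x, e (r • x) = s • e x)
        (List.ofFn fun i : Fin n => (X i.succ : MvPolynomial (Fin (n + 1)) S))
        (List.ofFn (X : Fin n → MvPolynomial (Fin n) S)) := by
      refine auxForall₂ fun j x => ?_
      obtain ⟨p, rfl⟩ := Submodule.Quotient.mk_surjective _ x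
      rw [← Submodule.Quotient.mk_smul, hmk, hmk,
        smul_eq_mul (α := MvPolynomial (Fin (n + 1)) S),
        smul_eq_mul (α := MvPolynomial (Fin n) S), auxKillX0_mk, auxKillX0_mk, map_mul]
      simp
    exact (AddEquiv.isRegular_congr key).mpr ih

end Aux

/-- The ideal `(tX₁ - a₁, …, tXₙ - aₙ)` of `B[X₁,…,Xₙ]`. -/
noncomputable def stmt0RelIdeal (n : ℕ) (t : B) (a : Fin n → B) :
    Ideal (MvPolynomial (Fin n) B) :=
  Ideal.span (Set.range fun i => C t * X i - C (a i))

/-- The ring `C⁺ = B[X₁,…,Xₙ]/(tXᵢ - aᵢ)`. -/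
noncomputable abbrev stmt0Cplus (n : ℕ) (t : B) (a : Fin n → B) : Type _ :=
  MvPolynomial (Fin n) B ⧸ stmt0RelIdeal n t a

/-- The quotient `C⁺/(t)`. -/
noncomputable abbrev stmt0CplusModT (n : ℕ) (t : B) (a : Fin n → B) : Type _ :=
  stmt0Cplus n t a ⧸
    Ideal.span {Ideal.Quotient.mk (stmt0RelIdeal n t a) (C t)}

/-- The image of `Xᵢ` (i.e. of `aᵢ/t`) in `C⁺/(t)`. -/
noncomputable def stmt0Xbar (n : ℕ) (t : B) (a : Fin n → B) (i : Fin n) :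
    stmt0CplusModT n t a :=
  Ideal.Quotient.mk _ (Ideal.Quotient.mk (stmt0RelIdeal n t a) (X i))

/-- if `(t, a₁, …, aₙ)` is a regular sequence in `B⁺` and
`C⁺ = B⁺[X₁,…,Xₙ]/(tXᵢ - aᵢ)`, then `C⁺/(t) ≅ (B⁺/(t,a₁,…,aₙ))[X₁,…,Xₙ]` via an
isomorphism sending (the image of) `Xᵢ` to `Xᵢ`; in particular the images of the
`Xᵢ` form a regular sequence in `C⁺/(t)`. -/
theorem stmt0 (n : ℕ) (t : B) (a : Fin n → B)
    (hreg : RingTheory.Sequence.IsRegular B (t :: List.ofFn a)) :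
    (∃ e : stmt0CplusModT n t a ≃+*
        MvPolynomial (Fin n) (B ⧸ Ideal.span (insert t (Set.range a))),
      ∀ i : Fin n, e (stmt0Xbar n t a i) = X i) ∧
    RingTheory.Sequence.IsRegular (stmt0CplusModT n t a)
      (List.ofFn (stmt0Xbar n t a)) := by
  set J : Ideal B := Ideal.span (insert t (Set.range a)) with hJ
  -- J is proper
  have hJofList : Ideal.ofList (t :: List.ofFn a) = J := by
    rw [Ideal.ofList, hJ]
    congr 1
    ext x
    simp [List.mem_ofFn]
  have hJne : J ≠ ⊤ := by
    intro h
    apply hreg.top_ne_smul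
    rw [hJofList, h, smul_eq_mul, Ideal.mul_top]
  have : Nontrivial (B ⧸ J) := Ideal.Quotient.nontrivial_iff.mpr hJne
  -- the key ideal identity
  have hsup : stmt0RelIdeal n t a ⊔ Ideal.span {(C t : MvPolynomial (Fin n) B)} =
      Ideal.map C J := by
    rw [hJ, Ideal.map_span, Set.image_insert_eq]
    apply le_antisymm
    · refine sup_le (Ideal.span_le.mpr ?_) (Ideal.span_le.mpr ?_)
      · rintro _ ⟨i, rfl⟩
        have ht : (C t : MvPolynomial (Fin n) B) ∈
            Ideal.span (insert (C t) (C '' Set.range a)) :=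
          Ideal.subset_span (Set.mem_insert _ _)
        have ha : (C (a i) : MvPolynomial (Fin n) B) ∈
            Ideal.span (insert (C t) (C '' Set.range a)) :=
          Ideal.subset_span (Set.mem_insert_of_mem _ ⟨a i, ⟨i, rfl⟩, rfl⟩)
        exact sub_mem (Ideal.mul_mem_right _ _ ht) ha
      · rintro _ rfl
        exact Ideal.subset_span (Set.mem_insert _ _)
    · rw [Ideal.span_le]
      rintro _ (rfl | ⟨_, ⟨i, rfl⟩, rfl⟩)
      · exact Ideal.mem_sup_right (Ideal.subset_span rfl)
      · have h1 : (C t : MvPolynomial (Fin n) B) * X i ∈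
            stmt0RelIdeal n t a ⊔ Ideal.span {(C t : MvPolynomial (Fin n) B)} :=
          Ideal.mem_sup_right (Ideal.mul_mem_right _ _ (Ideal.subset_span rfl))
        have h2 : (C t : MvPolynomial (Fin n) B) * X i - C (a i) ∈
            stmt0RelIdeal n t a ⊔ Ideal.span {(C t : MvPolynomial (Fin n) B)} :=
          Ideal.mem_sup_left (Ideal.subset_span ⟨i, rfl⟩)
        have : (C (a i) : MvPolynomial (Fin n) B) =
            C t * X i - (C t * X i - C (a i)) := by ring
        rw [this]
        exact sub_mem h1 h2
  -- build the isomorphism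
  let e1 : stmt0CplusModT n t a ≃+*
      ((MvPolynomial (Fin n) B ⧸ stmt0RelIdeal n t a) ⧸
        Ideal.map (Ideal.Quotient.mk (stmt0RelIdeal n t a))
          (Ideal.span {(C t : MvPolynomial (Fin n) B)})) :=
    Ideal.quotEquivOfEq (by rw [Ideal.map_span, Set.image_singleton])
  let e2 := DoubleQuot.quotQuotEquivQuotSup (stmt0RelIdeal n t a)
    (Ideal.span {(C t : MvPolynomial (Fin n) B)})
  let e3 : (MvPolynomial (Fin n) B ⧸
        (stmt0RelIdeal n t a ⊔ Ideal.span {(C t : MvPolynomial (Fin n) B)})) ≃+*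
      (MvPolynomial (Fin n) B ⧸ Ideal.map C J) :=
    Ideal.quotEquivOfEq hsup
  let e4 : (MvPolynomial (Fin n) B ⧸ Ideal.map C J) ≃+* MvPolynomial (Fin n) (B ⧸ J) :=
    (MvPolynomial.quotientEquivQuotientMvPolynomial J).symm.toRingEquiv
  let e : stmt0CplusModT n t a ≃+* MvPolynomial (Fin n) (B ⧸ J) :=
    e1.trans (e2.trans (e3.trans e4))
  have he : ∀ i : Fin n, e (stmt0Xbar n t a i) = X i := by
    intro i
    have h4 : e4 (Ideal.Quotient.mk _ (X i)) = X i := by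
      rw [show (Ideal.Quotient.mk (Ideal.map C J) (X i)) =
        (MvPolynomial.quotientEquivQuotientMvPolynomial J) (X i) by
          simp [MvPolynomial.quotientEquivQuotientMvPolynomial]]
      exact (MvPolynomial.quotientEquivQuotientMvPolynomial J).symm_apply_apply _
    show e4 (e3 (e2 (e1 (stmt0Xbar n t a i)))) = X i
    rw [show e1 (stmt0Xbar n t a i) =
      DoubleQuot.quotQuotMk (stmt0RelIdeal n t a)
        (Ideal.span {(C t : MvPolynomial (Fin n) B)}) (X i) from rfl]
    rw [DoubleQuot.quotQuotEquivQuotSup_quotQuotMk]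
    rw [show e3 (Ideal.Quotient.mk _ (X i)) = Ideal.Quotient.mk _ (X i) from
      Ideal.quotEquivOfEq_mk hsup (X i)]
    exact h4
  refine ⟨⟨e, he⟩, ?_⟩
  rw [auxRegCongr e]
  have : List.map (⇑e) (List.ofFn (stmt0Xbar n t a)) =
      List.ofFn (X : Fin n → MvPolynomial (Fin n) (B ⧸ J)) := by
    rw [List.map_ofFn]
    congr 1
    funext i
    exact he i
  rw [this]
  exact auxXReg (B ⧸ J) n
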